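/- arXiv:0902.0488 — 2 statements merged into one kernel-verified Lean document; each statement's English description precedes it below -/
import Mathlib

section
/- Let β > 1 be a Pisot number and let m > β be a positive integer. For x ∈ I_β and n ≥ 1, let ℰ_n(x;β) denote the set of words (ε₁,…,ε_n) ∈ {0,1,…,m−1}^n occurring as the first n digits of some β-expansion of x, and let ℰ′_n(x;β) = {(ε₁,…,ε_n) ∈ {0,1,…,m−1}^n : x − (m−1)β^{−n}/(β−1) − β^{−n}/n² ≤ Σ_{k=1}^n ε_k β^{−k} ≤ x + β^{−n}/n²}. Then for Lebesgue-almost every x ∈ I_β, ℰ′_n(x;β) = ℰ_n(x;β) for all but finitely many n. -/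
open MeasureTheory Filter Set

/-- Number of length-`n` prefixes of β-expansions of `x` with digits in `{0,…,m-1}`. -/
noncomputable def Nn (β : ℝ) (m n : ℕ) (x : ℝ) : ℕ :=
  Nat.card {w : Fin n → Fin m // ∃ ε : ℕ → Fin m,
    (∀ k : Fin n, ε k = w k) ∧ x = ∑' k : ℕ, ((ε k : ℕ) : ℝ) / β ^ (k + 1)}

/-- β is a Pisot number. -/
def IsPisot (β : ℝ) : Prop :=
  1 < β ∧ ∃ p : Polynomial ℤ, p.Monic ∧ Polynomial.aeval β p = 0 ∧
    ∀ z : ℂ, Polynomial.aeval z p = 0 → z ≠ (β : ℂ) → ‖z‖ < 1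

/-- μ_{β,m}: pushforward of the infinite product of uniform measures on `{0,…,m-1}`
under `(ε_k) ↦ Σ ε_k β^{-(k+1)}`, realized via the base-`m` digit sequence of a
Lebesgue-random point of `[0,1)`. -/
noncomputable def mu (β : ℝ) (m : ℕ) : Measure ℝ :=
  Measure.map
    (fun x : ℝ => ∑' k : ℕ, ((⌊x * (m : ℝ) ^ (k + 1)⌋.toNat % m : ℕ) : ℝ) / β ^ (k + 1))
    (volume.restrict (Ico 0 1))

open Filter Set

lemma geom_aux {β : ℝ} (hβ : 1 < β) : ∑' k : ℕ, β⁻¹ ^ (k + 1) = (β - 1)⁻¹ := by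
  have h0 : (0:ℝ) < β := lt_trans one_pos hβ
  have h1 : β⁻¹ < 1 := inv_lt_one_of_one_lt₀ hβ
  have h2 : (0:ℝ) ≤ β⁻¹ := by positivity
  have := tsum_geometric_of_lt_one h2 h1
  have hs : Summable (fun k : ℕ => β⁻¹ ^ k) := summable_geometric_of_lt_one h2 h1
  have := (Summable.tsum_eq_zero_add hs)
  -- ∑' k, β⁻¹^k = 1 + ∑' k, β⁻¹^(k+1)
  have key : (1 - β⁻¹)⁻¹ = 1 + ∑' k : ℕ, β⁻¹ ^ (k + 1) := by
    rw [← tsum_geometric_of_lt_one h2 h1, this]; simp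
  have : ∑' k : ℕ, β⁻¹ ^ (k + 1) = (1 - β⁻¹)⁻¹ - 1 := by linarith
  rw [this]
  have h3 : (1 - β⁻¹) = (β - 1)/β := by field_simp
  have h4 : β - 1 ≠ 0 := by intro h; nlinarith
  rw [h3, inv_div]
  field_simp
  ring


lemma summable_bd {β : ℝ} (hβ : 1 < β) (f : ℕ → ℝ) (c : ℝ) (h0 : ∀ k, 0 ≤ f k)
    (hb : ∀ k, f k ≤ c) : Summable (fun k => f k / β ^ (k + 1)) := by
  have h0' : (0:ℝ) < β := lt_trans one_pos hβ
  have h1 : β⁻¹ < 1 := inv_lt_one_of_one_lt₀ hβ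
  have h2 : (0:ℝ) ≤ β⁻¹ := by positivity
  have hs : Summable (fun k : ℕ => c * β⁻¹ ^ (k + 1)) := by
    apply Summable.mul_left
    exact ((summable_geometric_of_lt_one h2 h1).comp_injective (add_left_injective 1))
  apply Summable.of_nonneg_of_le (fun k => div_nonneg (h0 k) (by positivity)) _ hs
  intro k
  rw [div_eq_mul_inv, ← inv_pow]
  exact mul_le_mul_of_nonneg_right (hb k) (by positivity)

lemma summable_digits {β : ℝ} {m : ℕ} (hβ : 1 < β) (ε : ℕ → Fin m) :
    Summable (fun k => ((ε k : ℕ) : ℝ) / β ^ (k + 1)) :=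
  summable_bd hβ _ (m : ℝ) (fun k => by positivity)
    (fun k => by exact_mod_cast (ε k).2.le)

lemma tail_bound {β : ℝ} {m : ℕ} (hβ : 1 < β) (ε : ℕ → Fin m) (n : ℕ) :
    0 ≤ ∑' j : ℕ, ((ε (j + n) : ℕ) : ℝ) / β ^ (j + n + 1) ∧
    ∑' j : ℕ, ((ε (j + n) : ℕ) : ℝ) / β ^ (j + n + 1) ≤
      ((m : ℝ) - 1) * β⁻¹ ^ n / (β - 1) := by
  have h0 : (0:ℝ) < β := lt_trans one_pos hβ
  have hsum : Summable (fun j : ℕ => ((ε (j + n) : ℕ) : ℝ) / β ^ (j + n + 1)) := by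
    have := (summable_digits hβ ε).comp_injective (add_left_injective n)
    exact this
  constructor
  · exact tsum_nonneg (fun j => by positivity)
  · have hle : ∀ j : ℕ, ((ε (j + n) : ℕ) : ℝ) / β ^ (j + n + 1) ≤
        ((m : ℝ) - 1) * β⁻¹ ^ n * β⁻¹ ^ (j + 1) := by
      intro j
      have h1 : ((ε (j + n) : ℕ) : ℝ) ≤ (m : ℝ) - 1 := by
        have := (ε (j + n)).2
        have : ((ε (j + n) : ℕ) : ℝ) + 1 ≤ (m : ℝ) := by exact_mod_cast this
        linarith
      have h2 : ((m : ℝ) - 1) * β⁻¹ ^ n * β⁻¹ ^ (j + 1) = ((m:ℝ) - 1) / β ^ (j + n + 1) := by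
        rw [inv_pow, inv_pow, div_eq_mul_inv, mul_assoc, ← mul_inv, ← pow_add]
        ring_nf
      rw [h2]
      exact div_le_div_of_nonneg_right h1 (by positivity) |>.trans_eq rfl
    have hsum2 : Summable (fun j : ℕ => ((m : ℝ) - 1) * β⁻¹ ^ n * β⁻¹ ^ (j + 1)) := by
      apply Summable.mul_left
      exact (summable_geometric_of_lt_one (by positivity)
        (inv_lt_one_of_one_lt₀ hβ)).comp_injective (add_left_injective 1)
    calc ∑' j : ℕ, ((ε (j + n) : ℕ) : ℝ) / β ^ (j + n + 1)
        ≤ ∑' j : ℕ, ((m : ℝ) - 1) * β⁻¹ ^ n * β⁻¹ ^ (j + 1) := Summable.tsum_le_tsum hle hsum hsum2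
      _ = ((m : ℝ) - 1) * β⁻¹ ^ n * (β - 1)⁻¹ := by rw [tsum_mul_left, geom_aux hβ]
      _ = ((m : ℝ) - 1) * β⁻¹ ^ n / (β - 1) := by rw [div_eq_mul_inv]

lemma greedy_expansion {β : ℝ} {m : ℕ} (hβ : 1 < β) (hm : β < m) :
    ∀ y : ℝ, 0 ≤ y → y ≤ ((m : ℝ) - 1) / (β - 1) →
      ∃ d : ℕ → Fin m, ∑' j : ℕ, ((d j : ℕ) : ℝ) / β ^ (j + 1) = y := by
  intro y hy0 hyM
  have h0 : (0:ℝ) < β := lt_trans one_pos hβ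
  have hb1 : (0:ℝ) < β - 1 := by linarith
  have hm2 : 2 ≤ m := by
    have h' : (1:ℝ) < (m:ℝ) := lt_trans hβ hm
    have : 1 < m := by exact_mod_cast h'
    omega
  have hm1 : (1:ℝ) ≤ (m:ℝ) - 1 := by
    have : (2:ℝ) ≤ (m:ℝ) := by exact_mod_cast hm2
    linarith
  have hmpos : 0 < m := by exact_mod_cast lt_trans h0 hm
  set M : ℝ := ((m : ℝ) - 1) / (β - 1) with hM
  have hM1 : 1 ≤ M := by
    rw [hM, le_div_iff₀ hb1]; nlinarith
  -- digit function
  let dig : ℝ → ℕ := fun t => min (⌊β * t⌋.toNat) (m - 1)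
  -- state sequence
  let t : ℕ → ℝ := fun j => Nat.rec y (fun _ s => β * s - dig s) j
  have ht0 : t 0 = y := rfl
  have htS : ∀ j, t (j + 1) = β * t j - dig (t j) := fun j => rfl
  have hinv : ∀ j, 0 ≤ t j ∧ t j ≤ M := by
    intro j
    induction j with
    | zero => exact ⟨hy0, hyM⟩
    | succ j ih =>
      rcases ih with ⟨h1, h2⟩
      rw [htS]
      by_cases hc : ⌊β * t j⌋.toNat ≤ m - 1
      · have hd : (dig (t j) : ℝ) = (⌊β * t j⌋.toNat : ℝ) := by
          simp [dig, min_eq_left hc]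
        have hfl : (⌊β * t j⌋.toNat : ℝ) = (⌊β * t j⌋ : ℝ) := by
          have : (0:ℤ) ≤ ⌊β * t j⌋ := Int.floor_nonneg.2 (by positivity)
          exact_mod_cast Int.toNat_of_nonneg this
        constructor
        · rw [hd, hfl]; have := Int.floor_le (β * t j); linarith
        · rw [hd, hfl]
          have := Int.lt_floor_add_one (β * t j)
          linarith
      · push_neg at hc
        have hd : (dig (t j) : ℝ) = ((m : ℝ) - 1) := by
          have : dig (t j) = m - 1 := min_eq_right (le_of_lt hc)
          rw [this]
          have : (1:ℕ) ≤ m := hmpos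
          push_cast [Nat.cast_sub this]
          ring
        constructor
        · rw [hd]
          have h3 : ((m:ℕ) - 1 : ℕ) < ⌊β * t j⌋.toNat := hc
          have h4 : ((m - 1 : ℕ) : ℝ) < (⌊β * t j⌋.toNat : ℝ) := by exact_mod_cast h3
          have h5 : (⌊β * t j⌋.toNat : ℝ) ≤ β * t j := by
            rcases le_or_gt 0 ⌊β * t j⌋ with h | h
            · rw [show ((⌊β * t j⌋.toNat : ℕ) : ℝ) = ((⌊β * t j⌋ : ℤ) : ℝ) by
                exact_mod_cast Int.toNat_of_nonneg h]
              exact Int.floor_le _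
            · simp [Int.toNat_of_nonpos h.le]
              positivity
          have h6 : ((m:ℝ) - 1) ≤ β * t j := by
            have : ((m - 1 : ℕ) : ℝ) = (m : ℝ) - 1 := by
              push_cast [Nat.cast_sub (show (1:ℕ) ≤ m from hmpos)]; ring
            linarith
          linarith
        · rw [hd]
          have : β * t j ≤ β * M := by nlinarith
          have hMeq : β * M - ((m:ℝ) - 1) = M := by
            rw [hM]; field_simp; ring
          linarith
  have hdig_lt : ∀ j, dig (t j) < m := fun j =>
    lt_of_le_of_lt (min_le_right _ _) (Nat.sub_lt hmpos one_pos)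
  refine ⟨fun j => ⟨dig (t j), hdig_lt j⟩, ?_⟩
  -- partial sums identity
  have hps : ∀ N, ∑ j ∈ Finset.range N, (dig (t j) : ℝ) / β ^ (j + 1) = y - t N / β ^ N := by
    intro N
    induction N with
    | zero => simp [ht0]
    | succ N ih =>
      rw [Finset.sum_range_succ, ih, htS]
      have : β ^ (N + 1) = β ^ N * β := pow_succ β N
      field_simp
      ring
  have hsum : Summable (fun j : ℕ => (dig (t j) : ℝ) / β ^ (j + 1)) :=
    summable_bd hβ _ (m : ℝ) (fun j => by positivity)
      (fun j => by exact_mod_cast (hdig_lt j).le)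
  have hlim : Tendsto (fun N => ∑ j ∈ Finset.range N, (dig (t j) : ℝ) / β ^ (j + 1))
      atTop (nhds y) := by
    have h1 : Tendsto (fun N : ℕ => t N / β ^ N) atTop (nhds 0) := by
      apply squeeze_zero (fun N => div_nonneg (hinv N).1 (by positivity))
        (fun N => div_le_div_of_nonneg_right (hinv N).2 (by positivity) |>.trans_eq rfl)
      have : Tendsto (fun N : ℕ => M * β⁻¹ ^ N) atTop (nhds 0) := by
        rw [show (0:ℝ) = M * 0 by ring]
        exact (tendsto_pow_atTop_nhds_zero_of_lt_one (by positivity)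
          (inv_lt_one_of_one_lt₀ hβ)).const_mul M
      refine this.congr (fun N => ?_)
      rw [inv_pow, div_eq_mul_inv]
    have := tendsto_const_nhds (x := y) (f := atTop (α := ℕ)) |>.sub h1
    rw [sub_zero] at this
    exact this.congr (fun N => (hps N).symm)
  exact tendsto_nhds_unique hsum.hasSum.tendsto_sum_nat hlim

lemma card_separated (V : Finset ℝ) (ε L : ℝ) (hε : 0 < ε) (hL : 0 ≤ L)
    (hmem : ∀ v ∈ V, v ∈ Icc (0:ℝ) L)
    (hsep : ∀ u ∈ V, ∀ v ∈ V, u ≠ v → ε ≤ |u - v|) :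
    (V.card : ℝ) ≤ L / ε + 1 := by
  have hinj : Set.InjOn (fun v => ⌊v / ε⌋) V := by
    intro u hu v hv huv
    by_contra hne
    have h1 : ε ≤ |u - v| := hsep u hu v hv hne
    have h2 : |u / ε - v / ε| < 1 := by
      simp only at huv
      have ha := Int.floor_le (u / ε)
      have hb := Int.lt_floor_add_one (u / ε)
      have hc := Int.floor_le (v / ε)
      have hd := Int.lt_floor_add_one (v / ε)
      rw [huv] at ha hb
      rw [abs_lt]; constructor <;> linarith
    have : |u - v| / ε < 1 := by
      have he : |u - v| / ε = |(u - v) / ε| := by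
        rw [abs_div, abs_of_pos hε]
      rw [he, show (u - v) / ε = u / ε - v / ε by ring]
      exact h2
    rw [div_lt_one hε] at this
    linarith
  have hsub : V.image (fun v => ⌊v / ε⌋) ⊆ Finset.Icc 0 ⌊L / ε⌋ := by
    intro i hi
    rcases Finset.mem_image.1 hi with ⟨v, hv, rfl⟩
    rcases hmem v hv with ⟨h1, h2⟩
    rw [Finset.mem_Icc]
    constructor
    · exact Int.floor_nonneg.2 (by positivity)
    · exact Int.floor_le_floor (by gcongr)
  have hcard : V.card = (V.image (fun v => ⌊v / ε⌋)).card :=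
    (Finset.card_image_of_injOn hinj).symm
  have h2 : (V.image (fun v => ⌊v / ε⌋)).card ≤ (Finset.Icc (0:ℤ) ⌊L / ε⌋).card :=
    Finset.card_le_card hsub
  have h3 : ((Finset.Icc (0:ℤ) ⌊L / ε⌋).card : ℝ) ≤ L / ε + 1 := by
    rw [Int.card_Icc]
    have h4 : (0:ℤ) ≤ ⌊L / ε⌋ := Int.floor_nonneg.2 (by positivity)
    have h5 : ((⌊L / ε⌋ + 1 - 0).toNat : ℝ) = (⌊L / ε⌋ : ℝ) + 1 := by
      rw [show (⌊L / ε⌋ + 1 - 0 : ℤ) = ⌊L / ε⌋ + 1 by ring]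
      exact_mod_cast Int.toNat_of_nonneg (by omega)
    rw [h5]
    have := Int.floor_le (L / ε)
    linarith
  calc (V.card : ℝ) = ((V.image (fun v => ⌊v / ε⌋)).card : ℝ) := by exact_mod_cast hcard
    _ ≤ ((Finset.Icc (0:ℤ) ⌊L / ε⌋).card : ℝ) := by exact_mod_cast h2
    _ ≤ L / ε + 1 := h3


set_option maxHeartbeats 1000000 in
open IntermediateField Polynomial in
lemma garsia {β : ℝ} (hβ : IsPisot β) (m : ℕ) :
    ∃ c : ℝ, 0 < c ∧ ∀ (n : ℕ) (d : Fin n → ℤ), (∀ k, |d k| ≤ (m : ℤ)) →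
      (∑ k : Fin n, (d k : ℝ) * β ^ (k : ℕ)) ≠ 0 →
      c ≤ |∑ k : Fin n, (d k : ℝ) * β ^ (k : ℕ)| := by
  classical
  letI : DecidableEq (ℚ⟮β⟯ →ₐ[ℚ] ℂ) := Classical.decEq _
  obtain ⟨hβ1, p, hmonic, hroot, hconj⟩ := hβ
  -- β is integral over ℚ
  have hpQ : Polynomial.aeval β (p.map (algebraMap ℤ ℚ)) = 0 := by
    rw [Polynomial.aeval_map_algebraMap]; exact hroot
  have hint : IsIntegral ℚ β := ⟨p.map (algebraMap ℤ ℚ), hmonic.map _, hpQ⟩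
  set K := ℚ⟮β⟯ with hK
  haveI : FiniteDimensional ℚ K := IntermediateField.adjoin.finiteDimensional hint
  set βK : K := IntermediateField.AdjoinSimple.gen ℚ β with hβK
  have hvalgen : (K.val) βK = β := rfl
  -- βK is integral over ℤ
  have hβKp : Polynomial.aeval βK p = 0 := by
    have h1 : (K.val) (Polynomial.aeval βK p) = Polynomial.aeval β p := by
      rw [← Polynomial.aeval_map_algebraMap ℚ, ← Polynomial.aeval_algHom_apply,
        hvalgen, Polynomial.aeval_map_algebraMap]
    apply K.val.injective
    show K.val ((Polynomial.aeval βK) p) = K.val 0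
    rw [h1, hroot, map_zero]
  have hβKint : IsIntegral ℤ βK := ⟨p, hmonic, hβKp⟩
  -- embeddings
  let σ₀ : K →ₐ[ℚ] ℂ := ((Complex.ofRealAm).restrictScalars ℚ).comp K.val
  have hσ₀gen : σ₀ βK = (β : ℂ) := rfl
  -- each embedding sends βK to a root of p
  have hrootσ : ∀ σ : K →ₐ[ℚ] ℂ, Polynomial.aeval (σ βK) p = 0 := by
    intro σ
    have h1 : Polynomial.aeval (σ βK) (minpoly ℚ βK) = 0 := by
      rw [Polynomial.aeval_algHom_apply, minpoly.aeval, map_zero]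
    have h2 : minpoly ℚ βK ∣ p.map (algebraMap ℤ ℚ) := by
      apply minpoly.dvd
      rw [Polynomial.aeval_map_algebraMap]; exact hβKp
    have h3 : Polynomial.aeval (σ βK) (p.map (algebraMap ℤ ℚ)) = 0 := by
      obtain ⟨q, hq⟩ := h2
      rw [hq, map_mul, h1, zero_mul]
    rwa [Polynomial.aeval_map_algebraMap] at h3
  -- embeddings other than σ₀ send βK elsewhere
  have hne : ∀ σ : K →ₐ[ℚ] ℂ, σ ≠ σ₀ → σ βK ≠ (β : ℂ) := by
    intro σ hσ h
    apply hσ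
    have pb := IntermediateField.adjoin.powerBasis hint
    apply (IntermediateField.adjoin.powerBasis hint).algHom_ext
    rw [show (IntermediateField.adjoin.powerBasis hint).gen = βK from rfl]; exact h.trans hσ₀gen.symm
  obtain ⟨T, hT⟩ : ∃ T : Finset (K →ₐ[ℚ] ℂ), T = Finset.univ.erase σ₀ := ⟨_, rfl⟩
  -- bound on conjugates
  have hθ : ∃ θ : ℝ, 0 ≤ θ ∧ θ < 1 ∧ ∀ σ ∈ T, ‖σ βK‖ ≤ θ := by
    rcases T.eq_empty_or_nonempty with h | h
    · exact ⟨0, le_refl _, one_pos, by simp [h]⟩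
    · have hle : ∀ σ ∈ T, ‖σ βK‖ ≤ T.sup' h (fun σ => ‖σ βK‖) :=
        fun σ hσ => Finset.le_sup' (fun σ : K →ₐ[ℚ] ℂ => ‖σ βK‖) hσ
      have hlt : ∀ σ ∈ T, ‖σ βK‖ < 1 := by
        intro σ hσ
        have hσ' : σ ≠ σ₀ := by
          rw [hT, Finset.mem_erase] at hσ; exact hσ.1
        exact hconj _ (hrootσ σ) (hne σ hσ')
      refine ⟨T.sup' h (fun σ => ‖σ βK‖), ?_, ?_, hle⟩
      · obtain ⟨σ, hσ⟩ := h
        exact le_trans (norm_nonneg (σ βK)) (hle σ hσ)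
      · exact (Finset.sup'_lt_iff h).2 hlt
  obtain ⟨θ, hθ0, hθ1, hθb⟩ := hθ
  set B : ℝ := (m : ℝ) * (1 - θ)⁻¹ + 1 with hB
  have h1θ : (0:ℝ) < 1 - θ := by linarith
  have hB1 : (1:ℝ) ≤ B := by
    have h' : 0 ≤ (m : ℝ) * (1 - θ)⁻¹ := by positivity
    rw [hB]; linarith
  have hB0 : (0:ℝ) < B := lt_of_lt_of_le one_pos hB1
  refine ⟨(B ^ T.card)⁻¹, by positivity, ?_⟩
  intro n d hd hv
  set v : ℝ := ∑ k : Fin n, (d k : ℝ) * β ^ (k : ℕ) with hvdef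
  set x : K := ∑ k : Fin n, (d k : K) * βK ^ (k : ℕ) with hx
  have hvalx : (K.val) x = v := by
    rw [hx, hvdef, map_sum]
    exact Finset.sum_congr rfl (fun k _ => by rw [map_mul, map_pow, map_intCast, hvalgen])
  have hx0 : x ≠ 0 := by
    intro h; apply hv; rw [← hvalx, h, map_zero]
  -- x is integral over ℤ
  have hxint : IsIntegral ℤ x := by
    have : x ∈ integralClosure ℤ K := by
      apply Subalgebra.sum_mem
      intro k _
      exact Subalgebra.mul_mem _ (Subalgebra.intCast_mem _ _)
        (Subalgebra.pow_mem _ hβKint _)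
    exact this
  -- norm is a nonzero integer
  have hNint : IsIntegral ℤ (Algebra.norm ℚ x) := Algebra.isIntegral_norm ℚ hxint
  obtain ⟨z, hz⟩ := IsIntegrallyClosed.isIntegral_iff.1 hNint
  have hN0 : Algebra.norm ℚ x ≠ 0 := (Algebra.norm_ne_zero_iff).2 hx0
  have hz0 : z ≠ 0 := by rintro rfl; apply hN0; rw [← hz]; simp
  have hN1 : (1:ℝ) ≤ |((Algebra.norm ℚ x : ℚ) : ℝ)| := by
    rw [← hz]
    have : (1:ℤ) ≤ |z| := Int.one_le_abs hz0
    have h2 : ((1:ℤ):ℝ) ≤ ((|z|:ℤ):ℝ) := by exact_mod_cast this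
    simpa using h2
  -- norm = product over embeddings
  have hprod : ((algebraMap ℚ ℂ) (Algebra.norm ℚ x)) = ∏ σ : K →ₐ[ℚ] ℂ, σ x :=
    Algebra.norm_eq_prod_embeddings ℚ ℂ x
  have habsprod : |((Algebra.norm ℚ x : ℚ) : ℝ)| = ∏ σ : K →ₐ[ℚ] ℂ, ‖σ x‖ := by
    have h1 : ‖(algebraMap ℚ ℂ) (Algebra.norm ℚ x)‖ =
        ∏ σ : K →ₐ[ℚ] ℂ, ‖σ x‖ := by
      rw [hprod, norm_prod]
    rw [← h1]
    rw [show ((algebraMap ℚ ℂ) (Algebra.norm ℚ x)) = (((Algebra.norm ℚ x : ℚ) : ℝ) : ℂ) by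
      rw [eq_ratCast (algebraMap ℚ ℂ)]; norm_cast]
    rw [Complex.norm_real, Real.norm_eq_abs]
  -- bound each conjugate factor
  have hfac : ∀ σ ∈ T, ‖σ x‖ ≤ B := by
    intro σ hσ
    have h1 : σ x = ∑ k : Fin n, (d k : ℂ) * (σ βK) ^ (k : ℕ) := by
      rw [hx, map_sum]
      congr 1; funext k
      rw [map_mul, map_pow, map_intCast]
    rw [h1]
    calc ‖∑ k : Fin n, (d k : ℂ) * (σ βK) ^ (k : ℕ)‖
        ≤ ∑ k : Fin n, ‖(d k : ℂ) * (σ βK) ^ (k : ℕ)‖ := by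
          exact norm_sum_le _ _
      _ ≤ ∑ k : Fin n, (m : ℝ) * θ ^ (k : ℕ) := by
          apply Finset.sum_le_sum
          intro k _
          rw [norm_mul, norm_pow]
          have hdk : ‖(d k : ℂ)‖ ≤ (m : ℝ) := by
            rw [show ((d k : ℂ)) = (((d k : ℤ) : ℝ) : ℂ) by push_cast; ring,
              Complex.norm_real, Real.norm_eq_abs]
            have := hd k
            have h2 : |(d k : ℝ)| = ((|d k| : ℤ) : ℝ) := by push_cast; ring
            rw [h2]; exact_mod_cast this
          have hzk : ‖σ βK‖ ^ (k:ℕ) ≤ θ ^ (k:ℕ) :=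
            pow_le_pow_left₀ (norm_nonneg _) (hθb σ hσ) _
          exact mul_le_mul hdk hzk (by positivity) (by positivity)
      _ = (m : ℝ) * ∑ k : Fin n, θ ^ (k : ℕ) := by rw [Finset.mul_sum]
      _ ≤ (m : ℝ) * (1 - θ)⁻¹ := by
          apply mul_le_mul_of_nonneg_left _ (by positivity)
          rw [Fin.sum_univ_eq_sum_range]
          have hsumθ : Summable (fun k : ℕ => θ ^ k) := summable_geometric_of_lt_one hθ0 hθ1
          calc ∑ i ∈ Finset.range n, θ ^ i ≤ ∑' k : ℕ, θ ^ k :=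
                Summable.sum_le_tsum _ (fun k _ => by positivity) hsumθ
            _ = (1 - θ)⁻¹ := tsum_geometric_of_lt_one hθ0 hθ1
      _ ≤ B := by rw [hB]; linarith
  -- combine
  have hsplit : ∏ σ : K →ₐ[ℚ] ℂ, ‖σ x‖ =
      ‖σ₀ x‖ * ∏ σ ∈ T, ‖σ x‖ := by
    rw [hT]
    exact (Finset.mul_prod_erase _ _ (Finset.mem_univ σ₀)).symm
  have hσ₀x : ‖σ₀ x‖ = |v| := by
    have : σ₀ x = ((v : ℝ) : ℂ) := by
      show ((Complex.ofRealAm).restrictScalars ℚ).comp K.val x = _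
      rw [AlgHom.comp_apply, hvalx]; rfl
    rw [this, Complex.norm_real, Real.norm_eq_abs]
  have hTprod : ∏ σ ∈ T, ‖σ x‖ ≤ B ^ T.card := by
    calc ∏ σ ∈ T, ‖σ x‖ ≤ ∏ _σ ∈ T, B :=
          Finset.prod_le_prod (fun σ _ => norm_nonneg _) hfac
      _ = B ^ T.card := Finset.prod_const B
  have hfinal : (1:ℝ) ≤ |v| * B ^ T.card := by
    calc (1:ℝ) ≤ |((Algebra.norm ℚ x : ℚ) : ℝ)| := hN1
      _ = ‖σ₀ x‖ * ∏ σ ∈ T, ‖σ x‖ := by rw [habsprod, hsplit]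
      _ ≤ |v| * B ^ T.card := by
          rw [hσ₀x]
          apply mul_le_mul_of_nonneg_left hTprod (abs_nonneg _)
  rw [inv_le_iff_one_le_mul₀ (by positivity)]
  linarith [hfinal]


noncomputable def pSum (β : ℝ) {m n : ℕ} (w : Fin n → Fin m) : ℝ :=
  ∑ k : Fin n, ((w k : ℕ) : ℝ) / β ^ ((k : ℕ) + 1)

noncomputable def badSet (β : ℝ) (m n : ℕ) : Set ℝ :=
  ⋃ w : Fin n → Fin m,
    (Set.Ico (pSum β w - β⁻¹ ^ n / (n : ℝ) ^ 2) (pSum β w) ∪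
     Set.Ioc (pSum β w + ((m:ℝ) - 1) * β⁻¹ ^ n / (β - 1))
       (pSum β w + ((m:ℝ) - 1) * β⁻¹ ^ n / (β - 1) + β⁻¹ ^ n / (n : ℝ) ^ 2))

lemma pSum_mem {β : ℝ} {m n : ℕ} (hβ : 1 < β) (hm1 : (1:ℝ) ≤ (m:ℝ)) (w : Fin n → Fin m) :
    pSum β w ∈ Icc (0:ℝ) (((m:ℝ) - 1)/(β - 1)) := by
  have h0 : (0:ℝ) < β := lt_trans one_pos hβ
  have hb1 : (0:ℝ) < β - 1 := by linarith
  constructor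
  · exact Finset.sum_nonneg (fun k _ => by positivity)
  · have h1 : ∀ k : Fin n, ((w k : ℕ) : ℝ) / β ^ ((k:ℕ) + 1) ≤
        ((m:ℝ) - 1) * β⁻¹ ^ ((k:ℕ) + 1) := by
      intro k
      have hk : ((w k : ℕ) : ℝ) ≤ (m:ℝ) - 1 := by
        have := (w k).isLt
        have h2 : ((w k : ℕ) : ℝ) + 1 ≤ (m : ℝ) := by exact_mod_cast this
        linarith
      rw [div_eq_mul_inv, ← inv_pow]
      exact mul_le_mul_of_nonneg_right hk (by positivity)
    calc pSum β w ≤ ∑ k : Fin n, ((m:ℝ) - 1) * β⁻¹ ^ ((k:ℕ) + 1) :=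
          Finset.sum_le_sum (fun k _ => h1 k)
      _ = ((m:ℝ) - 1) * ∑ k : Fin n, β⁻¹ ^ ((k:ℕ) + 1) := by rw [Finset.mul_sum]
      _ ≤ ((m:ℝ) - 1) * (β - 1)⁻¹ := by
          apply mul_le_mul_of_nonneg_left _ (by linarith)
          rw [Fin.sum_univ_eq_sum_range (fun k => β⁻¹ ^ (k + 1)) n, ← geom_aux hβ]
          apply Summable.sum_le_tsum _ (fun k _ => by positivity)
          exact (summable_geometric_of_lt_one (by positivity)
            (inv_lt_one_of_one_lt₀ hβ)).comp_injective (add_left_injective 1)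
      _ = ((m:ℝ) - 1)/(β - 1) := by rw [div_eq_mul_inv]

/-- for Lebesgue-a.e. x ∈ I_β, for all but finitely many n the slightly
enlarged digit set ℰ′_n(x;β) coincides with the prefix set ℰ_n(x;β). -/
theorem enlarged_prefix_set_eventually_equal (β : ℝ) (m : ℕ) (hβ : IsPisot β)
    (hm : β < m) :
    ∀ᵐ x ∂(volume.restrict (Icc (0 : ℝ) ((m - 1) / (β - 1)))),
      ∀ᶠ n : ℕ in atTop,
        {w : Fin n → Fin m |
            x - ((m : ℝ) - 1) * β⁻¹ ^ n / (β - 1) - β⁻¹ ^ n / (n : ℝ) ^ 2 ≤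
              ∑ k : Fin n, ((w k : ℕ) : ℝ) / β ^ ((k : ℕ) + 1) ∧
            ∑ k : Fin n, ((w k : ℕ) : ℝ) / β ^ ((k : ℕ) + 1) ≤ x + β⁻¹ ^ n / (n : ℝ) ^ 2} =
          {w : Fin n → Fin m | ∃ ε : ℕ → Fin m, (∀ k : Fin n, ε k = w k) ∧
            x = ∑' k : ℕ, ((ε k : ℕ) : ℝ) / β ^ (k + 1)} := by
  classical
  have hβ1 : 1 < β := hβ.1
  have h0 : (0:ℝ) < β := lt_trans one_pos hβ1
  have hb1 : (0:ℝ) < β - 1 := by linarith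
  have hm2 : 2 ≤ m := by
    have h' : (1:ℝ) < (m:ℝ) := lt_trans hβ1 hm
    have : 1 < m := by exact_mod_cast h'
    omega
  have hm1 : (1:ℝ) ≤ (m:ℝ) := by
    have : (2:ℝ) ≤ (m:ℝ) := by exact_mod_cast hm2
    linarith
  set M₀ : ℝ := ((m:ℝ) - 1)/(β - 1) with hM₀
  have hM₀0 : 0 ≤ M₀ := by rw [hM₀]; exact div_nonneg (by linarith) (by linarith)
  obtain ⟨c, hc0, hsep⟩ := garsia hβ m
  -- separation of prefix sums
  have hsepS : ∀ (n : ℕ) (w w' : Fin n → Fin m), pSum β w ≠ pSum β w' →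
      c * β⁻¹ ^ n ≤ |pSum β w - pSum β w'| := by
    intro n w w' hne
    set e : Fin n → ℤ := fun j => ((w j.rev : ℕ) : ℤ) - ((w' j.rev : ℕ) : ℤ) with he
    have hkey : ∑ j : Fin n, (e j : ℝ) * β ^ (j : ℕ) = β ^ n * (pSum β w - pSum β w') := by
      have step1 : ∑ j : Fin n, (e j : ℝ) * β ^ (j : ℕ) =
          ∑ k : Fin n, (((w k : ℕ) : ℝ) - ((w' k : ℕ) : ℝ)) * β ^ ((k.rev : ℕ)) := by
        apply Fintype.sum_equiv (Fin.revPerm)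
        intro j
        simp only [he, Fin.revPerm_apply, Fin.rev_rev]
        push_cast
        ring
      rw [step1]
      have step2 : ∀ k : Fin n, (((w k : ℕ) : ℝ) - ((w' k : ℕ) : ℝ)) * β ^ ((k.rev : ℕ)) =
          β ^ n * ((((w k : ℕ) : ℝ) / β ^ ((k:ℕ) + 1)) - (((w' k : ℕ) : ℝ) / β ^ ((k:ℕ) + 1))) := by
        intro k
        have hrev : (k.rev : ℕ) = n - ((k:ℕ) + 1) := Fin.val_rev k
        have hle : (k:ℕ) + 1 ≤ n := k.isLt
        rw [hrev, pow_sub₀ β (ne_of_gt h0) hle, div_sub_div_same]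
        ring
      rw [Finset.sum_congr rfl (fun k _ => step2 k), ← Finset.mul_sum]
      congr 1
      rw [pSum, pSum, ← Finset.sum_sub_distrib]
    have hbd : ∀ j : Fin n, |e j| ≤ (m : ℤ) := by
      intro j
      have ha : ((w j.rev : ℕ) : ℤ) < m := by exact_mod_cast (w j.rev).isLt
      have hb : ((w' j.rev : ℕ) : ℤ) < m := by exact_mod_cast (w' j.rev).isLt
      have ha0 : (0:ℤ) ≤ ((w j.rev : ℕ) : ℤ) := Int.natCast_nonneg _
      have hb0 : (0:ℤ) ≤ ((w' j.rev : ℕ) : ℤ) := Int.natCast_nonneg _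
      simp only [he, abs_le]
      constructor <;> omega
    have hnz : ∑ j : Fin n, (e j : ℝ) * β ^ (j : ℕ) ≠ 0 := by
      rw [hkey]
      exact mul_ne_zero (pow_ne_zero _ (ne_of_gt h0)) (sub_ne_zero.2 hne)
    have := hsep n e hbd hnz
    rw [hkey, abs_mul, abs_of_pos (by positivity : (0:ℝ) < β ^ n)] at this
    have hβn : (0:ℝ) < β ^ n := by positivity
    have hcan : β ^ n * β⁻¹ ^ n = 1 := by
      rw [inv_pow, mul_inv_cancel₀ (by positivity : (β:ℝ) ^ n ≠ 0)]
    have h2 : c * β⁻¹ ^ n ≤ (β ^ n * |pSum β w - pSum β w'|) * β⁻¹ ^ n :=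
      mul_le_mul_of_nonneg_right this (by positivity)
    rwa [mul_comm (β ^ n) _, mul_assoc, hcan, mul_one] at h2
  -- volume bound for bad sets
  set C : ℝ := 2 * M₀ / c + 2 with hC
  have hC0 : 0 ≤ C := by rw [hC]; positivity
  have hvol : ∀ n : ℕ, volume (badSet β m n) ≤ ENNReal.ofReal (C * (1/(n:ℝ)^2)) := by
    intro n
    set t : ℝ := β⁻¹ ^ n with ht
    set q : ℝ := 1/(n:ℝ)^2 with hq
    have ht0 : (0:ℝ) < t := by rw [ht]; positivity
    have ht1 : t ≤ 1 := by
      rw [ht]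
      exact pow_le_one₀ (by positivity) (inv_le_one_of_one_le₀ hβ1.le)
    have hq0 : (0:ℝ) ≤ q := by rw [hq]; positivity
    have hδ : β⁻¹ ^ n / (n:ℝ)^2 = t * q := by rw [ht, hq]; ring
    set V : Finset ℝ := Finset.univ.image (fun w : Fin n → Fin m => pSum β w) with hV
    set Mn : ℝ := ((m:ℝ) - 1) * β⁻¹ ^ n / (β - 1) with hMn
    have hBsub : badSet β m n ⊆
        ⋃ v ∈ V, (Set.Ico (v - t * q) v ∪ Set.Ioc (v + Mn) (v + Mn + t * q)) := by
      intro x hx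
      rcases Set.mem_iUnion.1 hx with ⟨w, hw⟩
      apply Set.mem_biUnion (Finset.mem_image_of_mem _ (Finset.mem_univ w))
      rw [← hδ]
      exact hw
    have hcard : (V.card : ℝ) ≤ M₀ / (c * t) + 1 := by
      apply card_separated V (c * t) M₀ (by positivity) hM₀0
      · intro v hv
        rcases Finset.mem_image.1 hv with ⟨w, _, rfl⟩
        exact pSum_mem hβ1 hm1 w
      · intro u hu v hv huv
        rcases Finset.mem_image.1 hu with ⟨w, _, rfl⟩
        rcases Finset.mem_image.1 hv with ⟨w', _, rfl⟩
        rw [ht]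
        exact hsepS n w w' huv
    calc volume (badSet β m n)
        ≤ volume (⋃ v ∈ V, (Set.Ico (v - t * q) v ∪ Set.Ioc (v + Mn) (v + Mn + t * q))) :=
          measure_mono hBsub
      _ ≤ ∑ v ∈ V, volume (Set.Ico (v - t * q) v ∪ Set.Ioc (v + Mn) (v + Mn + t * q)) :=
          measure_biUnion_finset_le V _
      _ ≤ ∑ _v ∈ V, ENNReal.ofReal (2 * (t * q)) := by
          apply Finset.sum_le_sum
          intro v _
          calc volume (Set.Ico (v - t * q) v ∪ Set.Ioc (v + Mn) (v + Mn + t * q))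
              ≤ volume (Set.Ico (v - t * q) v) + volume (Set.Ioc (v + Mn) (v + Mn + t * q)) :=
                measure_union_le _ _
            _ = ENNReal.ofReal (t * q) + ENNReal.ofReal (t * q) := by
                rw [Real.volume_Ico, Real.volume_Ioc,
                  show v - (v - t * q) = t * q by ring,
                  show v + Mn + t * q - (v + Mn) = t * q by ring]
            _ = ENNReal.ofReal (2 * (t * q)) := by
                rw [← ENNReal.ofReal_add (by positivity) (by positivity)]
                congr 1; ring
      _ = (V.card : ENNReal) * ENNReal.ofReal (2 * (t * q)) := by
          rw [Finset.sum_const, nsmul_eq_mul]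
      _ = ENNReal.ofReal ((V.card : ℝ) * (2 * (t * q))) := by
          rw [← ENNReal.ofReal_natCast V.card,
            ← ENNReal.ofReal_mul (by positivity : (0:ℝ) ≤ ((V.card:ℕ):ℝ))]
      _ ≤ ENNReal.ofReal (C * (1/(n:ℝ)^2)) := by
          apply ENNReal.ofReal_le_ofReal
          rw [← hq]
          have key : (M₀ / (c * t) + 1) * (2 * (t * q)) = (2 * (M₀ / c)) * q + 2 * (t * q) := by
            field_simp
          have htq : t * q ≤ q := by nlinarith
          calc (V.card : ℝ) * (2 * (t * q))
              ≤ (M₀ / (c * t) + 1) * (2 * (t * q)) :=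
                mul_le_mul_of_nonneg_right hcard (by positivity)
            _ = (2 * (M₀ / c)) * q + 2 * (t * q) := key
            _ ≤ C * q := by
                rw [hC, show (2 * M₀ / c + 2) * q = 2 * (M₀ / c) * q + 2 * q by ring]
                linarith [htq]
  -- Borel-Cantelli
  have hsumtop : ∑' n : ℕ, volume (badSet β m n) ≠ ⊤ := by
    have hs : Summable (fun n : ℕ => C * (1/(n:ℝ)^2)) := by
      apply Summable.mul_left
      exact Real.summable_one_div_nat_pow.2 one_lt_two
    have hle : ∑' n : ℕ, volume (badSet β m n) ≤
        ∑' n : ℕ, ENNReal.ofReal (C * (1/(n:ℝ)^2)) := ENNReal.tsum_le_tsum hvol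
    have heq : ∑' n : ℕ, ENNReal.ofReal (C * (1/(n:ℝ)^2)) =
        ENNReal.ofReal (∑' n : ℕ, C * (1/(n:ℝ)^2)) :=
      (ENNReal.ofReal_tsum_of_nonneg (fun n => by positivity) hs).symm
    exact ne_top_of_le_ne_top (by rw [heq]; exact ENNReal.ofReal_ne_top) hle
  have hae := MeasureTheory.ae_eventually_notMem hsumtop
  apply ae_restrict_of_ae
  filter_upwards [hae] with x hx
  filter_upwards [hx, eventually_ge_atTop 1] with n hxn hn1
  -- the set equality for good x
  have hδ0 : (0:ℝ) ≤ β⁻¹ ^ n / (n:ℝ)^2 := by positivity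
  ext w
  simp only [Set.mem_setOf_eq]
  have hSw : pSum β w = ∑ k : Fin n, ((w k : ℕ) : ℝ) / β ^ ((k : ℕ) + 1) := rfl
  constructor
  · rintro ⟨h1, h2⟩
    rw [← hSw] at h1 h2
    -- x is not in the bad intervals for this w
    have hnotA : x ∉ Set.Ico (pSum β w - β⁻¹ ^ n / (n:ℝ)^2) (pSum β w) := by
      intro h
      exact hxn (Set.mem_iUnion.2 ⟨w, Or.inl h⟩)
    have hnotB : x ∉ Set.Ioc (pSum β w + ((m:ℝ) - 1) * β⁻¹ ^ n / (β - 1))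
        (pSum β w + ((m:ℝ) - 1) * β⁻¹ ^ n / (β - 1) + β⁻¹ ^ n / (n:ℝ)^2) := by
      intro h
      exact hxn (Set.mem_iUnion.2 ⟨w, Or.inr h⟩)
    have hSx : pSum β w ≤ x := by
      by_contra h
      push_neg at h
      exact hnotA ⟨by linarith, h⟩
    have hxS : x - ((m:ℝ) - 1) * β⁻¹ ^ n / (β - 1) ≤ pSum β w := by
      by_contra h
      push_neg at h
      exact hnotB ⟨by linarith, by linarith⟩
    -- construct the tail
    have hcan : β ^ n * β⁻¹ ^ n = 1 := by
      rw [inv_pow, mul_inv_cancel₀ (by positivity : (β:ℝ) ^ n ≠ 0)]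
    have hy'0 : 0 ≤ β ^ n * (x - pSum β w) := by
      apply mul_nonneg (by positivity)
      linarith
    have hy'M : β ^ n * (x - pSum β w) ≤ ((m:ℝ) - 1) / (β - 1) := by
      have : β ^ n * (x - pSum β w) ≤ β ^ n * (((m:ℝ) - 1) * β⁻¹ ^ n / (β - 1)) := by
        apply mul_le_mul_of_nonneg_left _ (by positivity)
        linarith
      calc β ^ n * (x - pSum β w) ≤ β ^ n * (((m:ℝ) - 1) * β⁻¹ ^ n / (β - 1)) := this
        _ = (β ^ n * β⁻¹ ^ n) * (((m:ℝ) - 1) / (β - 1)) := by ring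
        _ = ((m:ℝ) - 1) / (β - 1) := by rw [hcan, one_mul]
    obtain ⟨dt, hdt⟩ := greedy_expansion hβ1 hm (β ^ n * (x - pSum β w)) hy'0 hy'M
    refine ⟨fun k => if h : k < n then w ⟨k, h⟩ else dt (k - n), fun k => ?_, ?_⟩
    · simp only [k.isLt, dif_pos, Fin.eta]
    · set ε : ℕ → Fin m := fun k => if h : k < n then w ⟨k, h⟩ else dt (k - n) with hε
      have hsumε := summable_digits hβ1 ε
      rw [← Summable.sum_add_tsum_nat_add n hsumε]
      have hpre : ∑ i ∈ Finset.range n, ((ε i : ℕ) : ℝ) / β ^ (i + 1) = pSum β w := by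
        rw [← Fin.sum_univ_eq_sum_range (fun i => ((ε i : ℕ) : ℝ) / β ^ (i + 1)) n, pSum]
        apply Finset.sum_congr rfl
        intro k _
        congr 2
        simp only [hε, k.isLt, dif_pos, Fin.eta]
      have htail : ∑' i : ℕ, ((ε (i + n) : ℕ) : ℝ) / β ^ (i + n + 1) = x - pSum β w := by
        have hterm : ∀ i : ℕ, ((ε (i + n) : ℕ) : ℝ) / β ^ (i + n + 1) =
            (β ^ n)⁻¹ * (((dt i : ℕ) : ℝ) / β ^ (i + 1)) := by
          intro i
          have hni : ¬ (i + n < n) := by omega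
          have hε2 : ε (i + n) = dt i := by
            simp only [hε, dif_neg hni, Nat.add_sub_cancel]
          rw [hε2]
          have hexp : i + n + 1 = n + (i + 1) := by omega
          rw [hexp, pow_add]
          field_simp
        rw [tsum_congr hterm, tsum_mul_left, hdt, inv_mul_cancel_left₀
          (by positivity : (β:ℝ) ^ n ≠ 0)]
      rw [hpre, htail]
      ring
  · rintro ⟨ε, hεw, hxeq⟩
    have hsumε := summable_digits hβ1 ε
    have hsplit := Summable.sum_add_tsum_nat_add n hsumε
    have hpre : ∑ i ∈ Finset.range n, ((ε i : ℕ) : ℝ) / β ^ (i + 1) =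
        ∑ k : Fin n, ((w k : ℕ) : ℝ) / β ^ ((k : ℕ) + 1) := by
      rw [← Fin.sum_univ_eq_sum_range (fun i => ((ε i : ℕ) : ℝ) / β ^ (i + 1)) n]
      apply Finset.sum_congr rfl
      intro k _
      rw [hεw k]
    obtain ⟨ht0, ht1⟩ := tail_bound hβ1 ε n
    have hxe : x = ∑ k : Fin n, ((w k : ℕ) : ℝ) / β ^ ((k : ℕ) + 1) +
        ∑' i : ℕ, ((ε (i + n) : ℕ) : ℝ) / β ^ (i + n + 1) := by
      rw [hxeq, ← hsplit, hpre]
    constructor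
    · linarith
    · linarith
end

section
/- Let β > 1 be a real number, m > β a positive integer, K ≥ 1 an integer, and x ∈ I_β. Suppose that for every n ≥ 0 and every word (ε₁,…,ε_n) ∈ {0,1,…,m−1}^n occurring as the first n digits of some β-expansion of x, the tail value y = β^n·(x − Σ_{k=1}^n ε_k β^{−k}) satisfies 𝒩_K(y;β) ≥ 2. Then for every n ≥ 1, 𝒩_n(x;β) ≥ 2^{⌊n/K⌋} ≥ 2^{n/K − 1}. -/
open MeasureTheory Filter Set

/-! ### Auxiliary lemmas -/

lemma summable_exp (β : ℝ) (hβ : 1 < β) (m : ℕ) (ε : ℕ → Fin m) :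
    Summable (fun k : ℕ => ((ε k : ℕ) : ℝ) / β ^ (k + 1)) := by
  have hβ0 : (0:ℝ) < β := lt_trans one_pos hβ
  have hg : Summable (fun k : ℕ => (m : ℝ) * (1/β) ^ (k+1)) := by
    have h1 : Summable (fun k : ℕ => (1/β : ℝ) ^ k) :=
      summable_geometric_of_lt_one (by positivity) (by rw [div_lt_one hβ0]; exact hβ)
    have := (h1.mul_left ((m : ℝ) * (1/β)))
    refine this.congr (fun k => ?_)
    rw [pow_succ']
    ring
  refine Summable.of_nonneg_of_le (fun k => by positivity) (fun k => ?_) hg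
  have h1 : ((ε k : ℕ) : ℝ) ≤ m := by
    exact_mod_cast (ε k).2.le
  have h2 : (0:ℝ) < β ^ (k+1) := by positivity
  calc ((ε k : ℕ) : ℝ) / β ^ (k + 1) ≤ (m : ℝ) / β ^ (k+1) := by gcongr
    _ = (m : ℝ) * (1/β) ^ (k+1) := by rw [one_div, inv_pow]; ring

/-- Splitting a β-expansion into a prefix and a tail. -/
lemma tail_split (β : ℝ) (hβ : 1 < β) (m : ℕ) (ε : ℕ → Fin m) (n : ℕ) :
    (∑' k : ℕ, ((ε k : ℕ) : ℝ) / β ^ (k + 1)) =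
      (∑ k ∈ Finset.range n, ((ε k : ℕ) : ℝ) / β ^ (k + 1)) +
        (1 / β ^ n) * ∑' k : ℕ, ((ε (n + k) : ℕ) : ℝ) / β ^ (k + 1) := by
  have hβ0 : (0:ℝ) < β := lt_trans one_pos hβ
  have hs := summable_exp β hβ m ε
  rw [← Summable.sum_add_tsum_nat_add n hs]
  congr 1
  rw [← tsum_mul_left]
  refine tsum_congr (fun k => ?_)
  have : β ^ (k + n + 1) = β ^ n * β ^ (k + 1) := by ring
  rw [this, Nat.add_comm k n]
  field_simp

/-- Monotonicity of `Nn` in `n`. -/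
lemma Nn_mono (β : ℝ) (m : ℕ) (x : ℝ) {n' n : ℕ} (hnn : n' ≤ n) :
    Nn β m n' x ≤ Nn β m n x := by
  classical
  refine Nat.card_le_card_of_surjective
    (f := fun p : {w : Fin n → Fin m // ∃ ε : ℕ → Fin m,
        (∀ k : Fin n, ε k = w k) ∧ x = ∑' k : ℕ, ((ε k : ℕ) : ℝ) / β ^ (k + 1)} =>
      (⟨fun k => p.1 (Fin.castLE hnn k), by
        obtain ⟨ε, h1, h2⟩ := p.2
        exact ⟨ε, fun k => h1 (Fin.castLE hnn k), h2⟩⟩ :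
        {w : Fin n' → Fin m // ∃ ε : ℕ → Fin m,
          (∀ k : Fin n', ε k = w k) ∧ x = ∑' k : ℕ, ((ε k : ℕ) : ℝ) / β ^ (k + 1)}))
    ?_
  rintro ⟨w, ε, h1, h2⟩
  refine ⟨⟨fun k => ε k, ε, fun k => rfl, h2⟩, ?_⟩
  ext k
  exact congrArg _ (h1 k)

/-! ### Greedy expansion -/

noncomputable def grem (β : ℝ) (m : ℕ) (x : ℝ) : ℕ → ℝ
  | 0 => x
  | n+1 => β * grem β m x n - ((min (⌊β * grem β m x n⌋.toNat) (m-1) : ℕ) : ℝ)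

noncomputable def gdig (β : ℝ) (m : ℕ) (x : ℝ) (n : ℕ) : ℕ :=
  min (⌊β * grem β m x n⌋.toNat) (m-1)

lemma grem_succ (β : ℝ) (m : ℕ) (x : ℝ) (n : ℕ) :
    grem β m x (n+1) = β * grem β m x n - (gdig β m x n : ℝ) := rfl

lemma gdig_lt (β : ℝ) (m : ℕ) (x : ℝ) (n : ℕ) (hm : 1 ≤ m) : gdig β m x n < m :=
  lt_of_le_of_lt (min_le_right _ _) (by omega)

lemma grem_mem (β : ℝ) (hβ : 1 < β) (m : ℕ) (hm : β < m) (x : ℝ)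
    (hx : x ∈ Icc (0 : ℝ) ((m - 1) / (β - 1))) :
    ∀ n, 0 ≤ grem β m x n ∧ grem β m x n ≤ (m - 1) / (β - 1) := by
  have hβ0 : (0:ℝ) < β := lt_trans one_pos hβ
  have hβ1 : (0:ℝ) < β - 1 := by linarith
  have hm2 : 2 ≤ m := by
    have : (1:ℝ) < m := lt_trans hβ hm
    exact_mod_cast by
      have : (1:ℕ) < m := by exact_mod_cast this
      omega
  have hm1 : (1:ℝ) ≤ (m:ℝ) - 1 := by
    have : (2:ℝ) ≤ m := by exact_mod_cast hm2
    linarith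
  have hC1 : 1 ≤ ((m:ℝ) - 1) / (β - 1) := by
    rw [le_div_iff₀ hβ1]
    linarith
  intro n
  induction n with
  | zero => exact ⟨hx.1, hx.2⟩
  | succ n ih =>
    obtain ⟨h0, h1⟩ := ih
    set r := grem β m x n with hr
    have hβr : 0 ≤ β * r := mul_nonneg hβ0.le h0
    have hfl : (0:ℤ) ≤ ⌊β * r⌋ := Int.floor_nonneg.mpr hβr
    rw [grem_succ]
    by_cases hcase : ⌊β * r⌋.toNat ≤ m - 1
    · have hd : gdig β m x n = ⌊β * r⌋.toNat := by
        exact min_eq_left hcase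
      have hcast : ((gdig β m x n : ℕ) : ℝ) = (⌊β * r⌋ : ℝ) := by
        rw [hd]
        exact_mod_cast congrArg (Int.cast : ℤ → ℝ) (Int.toNat_of_nonneg hfl)
      rw [hcast]
      constructor
      · have := Int.floor_le (β * r)
        linarith
      · have := Int.lt_floor_add_one (β * r)
        linarith
    · have hd : gdig β m x n = m - 1 := by
        exact min_eq_right (le_of_not_ge hcase)
      have hcast : ((gdig β m x n : ℕ) : ℝ) = (m:ℝ) - 1 := by
        rw [hd]
        push_cast [Nat.cast_sub (by omega : 1 ≤ m)]
        ring
      have hge : (m:ℝ) ≤ β * r := by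
        have h1' : (m:ℕ) ≤ ⌊β * r⌋.toNat := by omega
        have h2' : ((m:ℕ):ℤ) ≤ ⌊β * r⌋ := by
          rw [← Int.toNat_of_nonneg hfl]
          exact_mod_cast h1'
        have := Int.floor_le (β * r)
        calc (m:ℝ) = (((m:ℕ):ℤ):ℝ) := by push_cast; ring
          _ ≤ (⌊β * r⌋ : ℝ) := by exact_mod_cast h2'
          _ ≤ β * r := this
      rw [hcast]
      constructor
      · linarith
      · have hbr : β * r ≤ β * (((m:ℝ) - 1) / (β - 1)) :=
          mul_le_mul_of_nonneg_left h1 hβ0.le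
        have hkey : β * (((m:ℝ) - 1) / (β - 1)) - ((m:ℝ) - 1) = ((m:ℝ) - 1) / (β - 1) := by
          field_simp
          ring
        linarith

lemma grem_partial (β : ℝ) (hβ : 1 < β) (m : ℕ) (x : ℝ) :
    ∀ n, ∑ k ∈ Finset.range n, ((gdig β m x k : ℕ) : ℝ) / β ^ (k + 1)
      = x - grem β m x n / β ^ n := by
  have hβ0 : (0:ℝ) < β := lt_trans one_pos hβ
  intro n
  induction n with
  | zero => simp [grem]
  | succ n ih =>
    rw [Finset.sum_range_succ, ih, grem_succ]
    have h1 : β ^ n ≠ 0 := by positivity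
    have h2 : β ^ (n+1) ≠ 0 := by positivity
    field_simp
    ring

lemma exists_expansion (β : ℝ) (hβ : 1 < β) (m : ℕ) (hm : β < m) (x : ℝ)
    (hx : x ∈ Icc (0 : ℝ) ((m - 1) / (β - 1))) :
    ∃ ε : ℕ → Fin m, x = ∑' k : ℕ, ((ε k : ℕ) : ℝ) / β ^ (k + 1) := by
  have hβ0 : (0:ℝ) < β := lt_trans one_pos hβ
  have hm1 : 1 ≤ m := by
    have : (1:ℝ) < m := lt_trans hβ hm
    exact_mod_cast this.le
  refine ⟨fun k => ⟨gdig β m x k, gdig_lt β m x k hm1⟩, ?_⟩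
  have hmem := grem_mem β hβ m hm x hx
  -- partial sums converge to x
  have hlim : Tendsto (fun n => grem β m x n / β ^ n) atTop (nhds 0) := by
    have hb : Tendsto (fun n : ℕ => (((m:ℝ) - 1) / (β - 1)) * (1/β) ^ n) atTop (nhds 0) := by
      have := tendsto_pow_atTop_nhds_zero_of_lt_one
        (by positivity : (0:ℝ) ≤ 1/β) (by rw [div_lt_one hβ0]; exact hβ)
      simpa using this.const_mul (((m:ℝ) - 1) / (β - 1))
    refine squeeze_zero (fun n => ?_) (fun n => ?_) hb
    · exact div_nonneg (hmem n).1 (by positivity)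
    · rw [div_le_iff₀ (by positivity : (0:ℝ) < β ^ n)]
      have : ((1:ℝ)/β) ^ n * β ^ n = 1 := by
        rw [← mul_pow]
        simp [hβ0.ne']
      calc grem β m x n ≤ ((m:ℝ) - 1) / (β - 1) := (hmem n).2
        _ = ((m:ℝ) - 1) / (β - 1) * ((1/β) ^ n * β ^ n) := by rw [this, mul_one]
        _ = ((m:ℝ) - 1) / (β - 1) * (1/β) ^ n * β ^ n := by ring
  have hpart : Tendsto
      (fun n => ∑ k ∈ Finset.range n, ((gdig β m x k : ℕ) : ℝ) / β ^ (k + 1))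
      atTop (nhds x) := by
    have : (fun n => ∑ k ∈ Finset.range n, ((gdig β m x k : ℕ) : ℝ) / β ^ (k + 1))
        = fun n => x - grem β m x n / β ^ n := by
      funext n; exact grem_partial β hβ m x n
    rw [this]
    simpa using (tendsto_const_nhds (x := x)).sub hlim
  have hsum := summable_exp β hβ m (fun k => (⟨gdig β m x k, gdig_lt β m x k hm1⟩ : Fin m))
  have := hsum.hasSum.tendsto_sum_nat
  simpa using tendsto_nhds_unique hpart this

/-- The set of length-`N` prefixes of β-expansions of `x`. -/
def Pref (β : ℝ) (m N : ℕ) (x : ℝ) :=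
  {w : Fin N → Fin m // ∃ ε : ℕ → Fin m,
    (∀ k : Fin N, ε k = w k) ∧ x = ∑' k : ℕ, ((ε k : ℕ) : ℝ) / β ^ (k + 1)}

lemma Nn_eq_card (β : ℝ) (m N : ℕ) (x : ℝ) : Nn β m N x = Nat.card (Pref β m N x) := rfl

instance (β : ℝ) (m N : ℕ) (x : ℝ) : Finite (Pref β m N x) := by
  unfold Pref; infer_instance

/-- Doubling step. -/
lemma Nn_double (β : ℝ) (hβ : 1 < β) (m : ℕ) (x : ℝ) (n K : ℕ)
    (h : ∀ ε : ℕ → Fin m, x = ∑' k : ℕ, ((ε k : ℕ) : ℝ) / β ^ (k + 1) →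
      2 ≤ Nn β m K
            (β ^ n * (x - ∑ k ∈ Finset.range n, ((ε k : ℕ) : ℝ) / β ^ (k + 1)))) :
    2 * Nn β m n x ≤ Nn β m (n + K) x := by
  classical
  have hβ0 : (0:ℝ) < β := lt_trans one_pos hβ
  have key : ∀ p : Pref β m n x,
      ∃ a b : Pref β m (n+K) x, a ≠ b ∧
        (∀ k : Fin n, a.1 ⟨k.1, by omega⟩ = p.1 k) ∧
        (∀ k : Fin n, b.1 ⟨k.1, by omega⟩ = p.1 k) := by
    intro p
    obtain ⟨ε, hε1, hε2⟩ := p.2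
    set y : ℝ := β ^ n * (x - ∑ k ∈ Finset.range n, ((ε k : ℕ) : ℝ) / β ^ (k + 1)) with hy
    have h2 : 2 ≤ Nn β m K y := h ε hε2
    rw [Nn_eq_card] at h2
    have hnt : Nontrivial (Pref β m K y) :=
      Finite.one_lt_card_iff_nontrivial.mp (lt_of_lt_of_le one_lt_two h2)
    obtain ⟨a, b, hab⟩ := hnt.exists_pair_ne
    -- construct extension from a tail-expansion witness
    have ext : ∀ c : Pref β m K y,
        ∃ g : Pref β m (n+K) x,
          (∀ k : Fin n, g.1 ⟨k.1, by omega⟩ = p.1 k) ∧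
          (∀ j : Fin K, g.1 ⟨n + j.1, by omega⟩ = c.1 j) := by
      intro c
      obtain ⟨δ, hδ1, hδ2⟩ := c.2
      set η : ℕ → Fin m := fun k => if hk : k < n then ε k else δ (k - n) with hη
      have hηlt : ∀ k, k < n → η k = ε k := fun k hk => dif_pos hk
      have hηge : ∀ k : ℕ, η (n + k) = δ k := by
        intro k
        have : ¬ (n + k < n) := by omega
        simp only [hη, dif_neg this, Nat.add_sub_cancel_left]
      have hxη : x = ∑' k : ℕ, ((η k : ℕ) : ℝ) / β ^ (k + 1) := by
        rw [tail_split β hβ m η n]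
        have e1 : (∑ k ∈ Finset.range n, ((η k : ℕ) : ℝ) / β ^ (k + 1))
            = ∑ k ∈ Finset.range n, ((ε k : ℕ) : ℝ) / β ^ (k + 1) := by
          refine Finset.sum_congr rfl (fun k hk => ?_)
          rw [hηlt k (Finset.mem_range.mp hk)]
        have e2 : (∑' k : ℕ, ((η (n + k) : ℕ) : ℝ) / β ^ (k + 1))
            = ∑' k : ℕ, ((δ k : ℕ) : ℝ) / β ^ (k + 1) := by
          refine tsum_congr (fun k => ?_)
          rw [hηge k]
        rw [e1, e2, ← hδ2, hy]
        have hβn : (β : ℝ) ^ n ≠ 0 := by positivity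
        field_simp
        ring
      refine ⟨⟨fun k => η k.1, η, fun k => rfl, hxη⟩, fun k => ?_, fun j => ?_⟩
      · show η k.1 = p.1 k
        rw [hηlt k.1 k.2]
        exact hε1 k
      · show η (n + j.1) = c.1 j
        rw [hηge j.1]
        exact hδ1 j
    obtain ⟨ga, hga1, hga2⟩ := ext a
    obtain ⟨gb, hgb1, hgb2⟩ := ext b
    refine ⟨ga, gb, ?_, hga1, hgb1⟩
    intro hEq
    apply hab
    apply Subtype.ext
    funext j
    have : ga.1 ⟨n + j.1, by omega⟩ = gb.1 ⟨n + j.1, by omega⟩ := by rw [hEq]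
    rw [hga2 j, hgb2 j] at this
    exact this
  choose fa fb hne hpa hpb using key
  have hinj : Function.Injective
      (fun q : Pref β m n x × Bool =>
        cond q.2 (fa q.1) (fb q.1)) := by
    rintro ⟨p, bp⟩ ⟨q, bq⟩ hEq
    simp only at hEq
    have hpq : ∀ (u v : Pref β m (n+K) x),
        (∀ k : Fin n, u.1 ⟨k.1, by omega⟩ = p.1 k) →
        (∀ k : Fin n, v.1 ⟨k.1, by omega⟩ = q.1 k) → u = v → p = q := by
      intro u v hu hv huv
      apply Subtype.ext
      funext k
      rw [← hu k, ← hv k, huv]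
    cases bp <;> cases bq <;>
      simp only [Bool.cond_false, Bool.cond_true] at hEq
    · rw [hpq _ _ (hpb p) (hpb q) hEq]
    · exfalso
      have := hpq _ _ (hpb p) (hpa q) hEq
      subst this
      exact hne p hEq.symm
    · exfalso
      have := hpq _ _ (hpa p) (hpb q) hEq
      subst this
      exact hne p hEq
    · rw [hpq _ _ (hpa p) (hpa q) hEq]
  have hcard := Nat.card_le_card_of_injective _ hinj
  rw [Nat.card_prod] at hcard
  have hBool : Nat.card Bool = 2 := by simp [Nat.card_eq_fintype_card]
  rw [hBool] at hcard
  rw [Nn_eq_card, Nn_eq_card]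
  omega

/-- if after every prefix of every β-expansion of x the tail value admits
at least two distinct digit words of length K (i.e. every branch of the branching tree
has length at most K), then `𝒩_n(x;β) ≥ 2^⌊n/K⌋ ≥ 2^{n/K−1}`. -/
theorem branching_lower_bound (β : ℝ) (hβ : 1 < β) (m : ℕ) (hm : β < m)
    (K : ℕ) (hK : 1 ≤ K) (x : ℝ) (hx : x ∈ Icc (0 : ℝ) ((m - 1) / (β - 1)))
    (h : ∀ (n : ℕ) (ε : ℕ → Fin m), x = ∑' k : ℕ, ((ε k : ℕ) : ℝ) / β ^ (k + 1) →
      2 ≤ Nn β m K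
            (β ^ n * (x - ∑ k ∈ Finset.range n, ((ε k : ℕ) : ℝ) / β ^ (k + 1)))) :
    ∀ n : ℕ, 1 ≤ n →
      2 ^ (n / K) ≤ Nn β m n x ∧
      (2 : ℝ) ^ ((n : ℝ) / (K : ℝ) - 1) ≤ (2 : ℝ) ^ (n / K) := by
  have hβ0 : (0:ℝ) < β := lt_trans one_pos hβ
  have hK0 : 0 < K := hK
  intro n hn
  constructor
  · -- main bound
    have hbase : 1 ≤ Nn β m 0 x := by
      obtain ⟨ε, hε⟩ := exists_expansion β hβ m hm x hx
      have : Nonempty {w : Fin 0 → Fin m // ∃ ε : ℕ → Fin m,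
          (∀ k : Fin 0, ε k = w k) ∧ x = ∑' k : ℕ, ((ε k : ℕ) : ℝ) / β ^ (k + 1)} :=
        ⟨⟨fun k => k.elim0, ε, fun k => k.elim0, hε⟩⟩
      exact Nat.card_pos
    have hstep : ∀ j : ℕ, 2 ^ j ≤ Nn β m (K * j) x := by
      intro j
      induction j with
      | zero => simpa using hbase
      | succ j ih =>
        have hdouble := Nn_double β hβ m x (K * j) K (h (K * j))
        calc 2 ^ (j + 1) = 2 * 2 ^ j := by ring
          _ ≤ 2 * Nn β m (K * j) x := by omega
          _ ≤ Nn β m (K * j + K) x := hdouble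
          _ = Nn β m (K * (j + 1)) x := by ring_nf
    calc 2 ^ (n / K) ≤ Nn β m (K * (n / K)) x := hstep (n / K)
      _ ≤ Nn β m n x := Nn_mono β m x (by
          calc K * (n / K) = n / K * K := Nat.mul_comm _ _
            _ ≤ n := Nat.div_mul_le_self n K)
  · -- exponent estimate
    have hKR : (0:ℝ) < K := by exact_mod_cast hK0
    have h1 : (n:ℝ) < K * (n / K : ℕ) + K := by
      have := Nat.div_add_mod n K
      have h2 : n % K < K := Nat.mod_lt n hK0
      have : (n : ℝ) = K * (n / K : ℕ) + (n % K : ℕ) := by exact_mod_cast (Nat.div_add_mod n K).symm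
      rw [this]
      have : ((n % K : ℕ) : ℝ) < K := by exact_mod_cast h2
      linarith
    have h3 : (n:ℝ) / K - 1 ≤ ((n / K : ℕ) : ℝ) := by
      have h4 : (n:ℝ) / K < ((n / K : ℕ) : ℝ) + 1 := by
        rw [div_lt_iff₀ hKR]
        nlinarith
      linarith
    calc (2:ℝ) ^ ((n : ℝ) / (K : ℝ) - 1) ≤ (2:ℝ) ^ (((n / K : ℕ)):ℝ) :=
          Real.rpow_le_rpow_of_exponent_le one_le_two h3
      _ = (2:ℝ) ^ (n / K) := Real.rpow_natCast 2 _
end
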